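/- arXiv:2104.10911 — 2 statements merged into one kernel-verified Lean document; each statement's English description precedes it below -/
import Mathlib

section
/- Let f : ℝⁿ → ℝ be a convex differentiable function, h : ℝᵐ → ℝ a closed convex function, A ∈ ℝ^{m×n}, ν > 0, and λ ∈ ℝᵐ. Define φ₁(x) := f(x) + min_{y∈ℝᵐ} { h(y) + ⟨λ, Ax − y⟩ + (ν/2)‖Ax − y‖² }. Then φ₁ is differentiable on ℝⁿ and its gradient satisfies ∇φ₁(x) = ∇f(x) + Aᵀ prox_{νh*}(νAx + λ) for every x ∈ ℝⁿ. -/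
open scoped RealInnerProductSpace Matrix


private lemma aux_small (a b c : ℝ) (H : ∀ t : ℝ, 0 < t → t ≤ 1 → a ≤ b + t * c) : a ≤ b := by
  refine le_of_forall_pos_le_add fun ε hε => ?_
  set t := min 1 (ε / (|c| + 1)) with ht
  have hc : 0 < |c| + 1 := by positivity
  have ht0 : 0 < t := lt_min one_pos (by positivity)
  have ht1 : t ≤ 1 := min_le_left _ _
  have htc : t * c ≤ ε := by
    calc t * c ≤ |t * c| := le_abs_self _
    _ = t * |c| := by rw [abs_mul, abs_of_pos ht0]
    _ ≤ (ε / (|c| + 1)) * (|c| + 1) := by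
        apply mul_le_mul (min_le_right _ _) (by linarith [le_abs_self c]) (abs_nonneg c)
        positivity
    _ = ε := by field_simp
  linarith [H t ht0 ht1]

private lemma aux_minorant {E : Type*} [NormedAddCommGroup E] [InnerProductSpace ℝ E]
    [FiniteDimensional ℝ E] (h : E → ℝ) (hconv : ConvexOn ℝ Set.univ h) :
    ∃ (u₀ : E) (c₀ : ℝ), ∀ y, ⟪u₀, y⟫ + c₀ ≤ h y := by
  have hcont : Continuous h := hconv.locallyLipschitz.continuous
  set S : Set (E × ℝ) := {p | h p.1 < p.2} with hS
  have hSopen : IsOpen S := isOpen_lt (hcont.comp continuous_fst) continuous_snd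
  have hSconv : Convex ℝ S := by
    intro p hp q hq a b ha hb hab
    simp only [hS, Set.mem_setOf_eq] at *
    calc h (a • p.1 + b • q.1) ≤ a * h p.1 + b * h q.1 :=
          hconv.2 (Set.mem_univ _) (Set.mem_univ _) ha hb hab
    _ < a * p.2 + b * q.2 := by
        rcases ha.lt_or_eq with ha' | ha'
        · rcases hb.lt_or_eq with hb' | hb'
          · exact add_lt_add (by nlinarith) (by nlinarith)
          · have : a = 1 := by linarith
            simp [← hb', this] at *; nlinarith
        · have : b = 1 := by linarith
          simp [← ha', this] at *; nlinarith
  have hx : ((0 : E), h 0 - 1) ∉ S := by simp [hS]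
  obtain ⟨L, hL⟩ := geometric_hahn_banach_point_open hSconv hSopen hx
  -- L (y, t) = L (y, 0) + t * L (0, 1)
  have hsplit : ∀ (y : E) (t : ℝ), L (y, t) = L (y, 0) + t * L (0, 1) := by
    intro y t
    have : (y, t) = (y, (0:ℝ)) + t • ((0:E), (1:ℝ)) := by simp [Prod.ext_iff]
    rw [this, map_add, map_smul, smul_eq_mul]
  have hkey : ∀ (y : E) (t : ℝ), h y < t → L (0, h 0 - 1) < L (y, t) := fun y t hyt => hL _ hyt
  have hL0 : L ((0 : E), (0 : ℝ)) = 0 := by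
    rw [show ((0 : E), (0 : ℝ)) = (0 : E × ℝ) from rfl]; exact map_zero L
  set c : ℝ := L (0, 1) with hc
  have hcpos : 0 < c := by
    have h1 := hkey 0 (h 0 + 1) (by linarith)
    rw [hsplit 0 (h 0 - 1), hsplit 0 (h 0 + 1)] at h1
    nlinarith
  have hineq : ∀ y : E, (h 0 - 1) * c ≤ L (y, 0) + h y * c := by
    intro y
    have H : ∀ t : ℝ, 0 < t → t ≤ 1 → (h 0 - 1) * c ≤ (L (y, 0) + h y * c) + t * c := by
      intro t ht0 ht1
      have := hkey y (h y + t) (by linarith)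
      rw [hsplit 0 (h 0 - 1), hsplit y (h y + t)] at this
      nlinarith
    exact aux_small _ _ _ H
  refine ⟨(InnerProductSpace.toDual ℝ E).symm
      (-(1/c) • ((L.comp (ContinuousLinearMap.inl ℝ E ℝ)))), h 0 - 1, fun y => ?_⟩
  rw [InnerProductSpace.toDual_symm_apply]
  have : ((-(1/c) • (L.comp (ContinuousLinearMap.inl ℝ E ℝ))) : E →L[ℝ] ℝ) y
      = -(1/c) * L (y, 0) := by
    simp [ContinuousLinearMap.smul_apply, ContinuousLinearMap.inl_apply]
  rw [this]
  have hiq := hineq y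
  have hc' : c ≠ 0 := ne_of_gt hcpos
  have expand : (-(1/c) * L (y, 0) + (h 0 - 1)) * c = -(L (y, 0)) + (h 0 - 1) * c := by
    field_simp
  have hmul : (-(1/c) * L (y, 0) + (h 0 - 1)) * c ≤ h y * c := by rw [expand]; linarith
  exact le_of_mul_le_mul_right hmul hcpos

private lemma aux_ereal_real (x : EReal) (a b : ℝ) (h1 : (a : EReal) ≤ x) (h2 : x ≤ (b : EReal)) :
    ∃ r : ℝ, x = (r : EReal) ∧ a ≤ r ∧ r ≤ b := by
  have hxt : x ≠ ⊤ := ne_top_of_le_ne_top (EReal.coe_ne_top b) h2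
  have hxb : x ≠ ⊥ := fun hx => by rw [hx] at h1; exact absurd h1 (by simp)
  refine ⟨x.toReal, (EReal.coe_toReal hxt hxb).symm, ?_, ?_⟩
  · exact_mod_cast (EReal.coe_toReal hxt hxb) ▸ h1
  · exact_mod_cast (EReal.coe_toReal hxt hxb) ▸ h2

variable {E : Type*} [NormedAddCommGroup E] [InnerProductSpace ℝ E] [FiniteDimensional ℝ E]

-- young-type inequality
private lemma aux_young (ν a b : ℝ) (hν : 0 < ν) (ha : 0 ≤ a) (hb : 0 ≤ b) :
    a * b ≤ ν / 2 * a ^ 2 + b ^ 2 / (2 * ν) := by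
  have key : 2 * ν * (a * b) ≤ 2 * ν * (ν / 2 * a ^ 2 + b ^ 2 / (2 * ν)) := by
    have h2 : 2 * ν * (ν / 2 * a ^ 2 + b ^ 2 / (2 * ν)) = ν ^ 2 * a ^ 2 + b ^ 2 := by
      field_simp
    rw [h2]; nlinarith [sq_nonneg (ν * a - b)]
  exact le_of_mul_le_mul_left key (by positivity)

/-- Weak duality: every point `u` where `hstar` is finite gives a lower bound on the
envelope infimum. -/
private lemma aux_weak (h : E → ℝ) (ν : ℝ) (hν : 0 < ν) (lam : E)
    (hstar : E → EReal)
    (hhstar : ∀ v, hstar v = ⨆ u : E, ((⟪u, v⟫ - h u : ℝ) : EReal))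
    (w u : E) (r : ℝ) (hur : hstar u = (r : EReal)) :
    ⟪w, u⟫ - r - ‖u - lam‖ ^ 2 / (2 * ν)
      ≤ ⨅ y : E, (h y + ⟪lam, w - y⟫ + ν / 2 * ‖w - y‖ ^ 2) := by
  have fen : ∀ y : E, ⟪y, u⟫ - h y ≤ r := by
    intro y
    have h1 : ((⟪y, u⟫ - h y : ℝ) : EReal) ≤ hstar u := by
      rw [hhstar]; exact le_iSup (fun y' : E => ((⟪y', u⟫ - h y' : ℝ) : EReal)) y
    rw [hur] at h1; exact_mod_cast h1
  refine le_ciInf fun y => ?_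
  have h1 := fen y
  have h2 : ⟪w - y, u - lam⟫ ≤ ‖w - y‖ * ‖u - lam‖ := real_inner_le_norm _ _
  have h3 := aux_young ν ‖w - y‖ ‖u - lam‖ hν (norm_nonneg _) (norm_nonneg _)
  have e1 : ⟪w - y, u - lam⟫ = ⟪w, u⟫ - ⟪w, lam⟫ - ⟪y, u⟫ + ⟪y, lam⟫ := by
    rw [inner_sub_left, inner_sub_right, inner_sub_right]; ring
  have e2 : ⟪lam, w - y⟫ = ⟪w, lam⟫ - ⟪y, lam⟫ := by
    rw [real_inner_comm, inner_sub_left]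
  linarith

/-- Existence of a minimizer of the envelope objective. -/
private lemma aux_argmin (h : E → ℝ) (hconv : ConvexOn ℝ Set.univ h)
    (ν : ℝ) (hν : 0 < ν) (lam : E) (v : E) :
    ∃ ystar : E, ∀ y : E,
      h ystar + ⟪lam, v - ystar⟫ + ν / 2 * ‖v - ystar‖ ^ 2
        ≤ h y + ⟪lam, v - y⟫ + ν / 2 * ‖v - y‖ ^ 2 := by
  obtain ⟨u₀, c₀, hmin⟩ := aux_minorant h hconv
  set obj : E → ℝ := fun y => h y + ⟪lam, v - y⟫ + ν / 2 * ‖v - y‖ ^ 2 with hobj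
  have hcont : Continuous obj := by
    have c1 : Continuous fun y : E => v - y := continuous_const.sub continuous_id
    exact ((hconv.locallyLipschitz.continuous.add
      (continuous_const.inner c1)).add (continuous_const.mul ((c1.norm).pow 2)))
  set K : ℝ := ‖u₀‖ + ‖lam‖ with hK
  set F : ℝ → ℝ := fun r =>
    (r - ‖v‖) * (ν / 2 * (r - ‖v‖) - K) + (c₀ + ⟪lam, v⟫ - K * ‖v‖) with hF
  have hFle : ∀ y : E, F ‖y‖ ≤ obj y := by
    intro y
    have l1 : ⟪u₀, y⟫ + c₀ ≤ h y := hmin y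
    have l2 : -(‖u₀‖ * ‖y‖) ≤ ⟪u₀, y⟫ := by
      have := real_inner_le_norm u₀ (-y); rw [inner_neg_right] at this
      simp only [norm_neg] at this; linarith
    have l3 : ⟪lam, y⟫ ≤ ‖lam‖ * ‖y‖ := le_trans (real_inner_le_norm _ _) le_rfl
    have l4 : ⟪lam, v - y⟫ = ⟪lam, v⟫ - ⟪lam, y⟫ := by rw [inner_sub_right]
    have l5 : (‖y‖ - ‖v‖) ^ 2 ≤ ‖v - y‖ ^ 2 := by
      have h1 : |‖y‖ - ‖v‖| ≤ ‖y - v‖ := abs_norm_sub_norm_le y v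
      rw [norm_sub_rev] at h1
      calc (‖y‖ - ‖v‖) ^ 2 = |‖y‖ - ‖v‖| ^ 2 := (sq_abs _).symm
      _ ≤ ‖v - y‖ ^ 2 := by
          apply pow_le_pow_left₀ (abs_nonneg _) h1
    have l6 : ν / 2 * (‖y‖ - ‖v‖) ^ 2 ≤ ν / 2 * ‖v - y‖ ^ 2 :=
      mul_le_mul_of_nonneg_left l5 (by positivity)
    have hFy : F ‖y‖ = c₀ + ⟪lam, v⟫ - K * ‖y‖ + ν / 2 * (‖y‖ - ‖v‖) ^ 2 := by
      rw [hF]; ring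
    rw [hFy, hobj]
    simp only [hK]
    nlinarith [norm_nonneg y]
  have hFtend : Filter.Tendsto F Filter.atTop Filter.atTop := by
    have t1 : Filter.Tendsto (fun r : ℝ => r - ‖v‖) Filter.atTop Filter.atTop :=
      Filter.tendsto_atTop_add_const_right _ _ Filter.tendsto_id
    have t2 : Filter.Tendsto (fun r : ℝ => ν / 2 * (r - ‖v‖) - K) Filter.atTop Filter.atTop :=
      Filter.tendsto_atTop_add_const_right _ _ (t1.const_mul_atTop (by positivity))
    exact Filter.tendsto_atTop_add_const_right _ _ (t1.atTop_mul_atTop₀ t2)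
  have htend : Filter.Tendsto obj (Filter.cocompact E) Filter.atTop :=
    Filter.tendsto_atTop_mono hFle (hFtend.comp tendsto_norm_cocompact_atTop)
  obtain ⟨ystar, hys⟩ := hcont.exists_forall_le htend
  exact ⟨ystar, hys⟩
/-- Optimality: the minimizer gives a subgradient of `h`. -/
private lemma aux_opt (h : E → ℝ) (hconv : ConvexOn ℝ Set.univ h)
    (ν : ℝ) (hν : 0 < ν) (lam : E) (v ystar : E)
    (hys : ∀ y : E,
      h ystar + ⟪lam, v - ystar⟫ + ν / 2 * ‖v - ystar‖ ^ 2
        ≤ h y + ⟪lam, v - y⟫ + ν / 2 * ‖v - y‖ ^ 2) :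
    ∀ y : E, h ystar + ⟪lam + ν • (v - ystar), y - ystar⟫ ≤ h y := by
  intro y
  have hexp : ⟪lam + ν • (v - ystar), y - ystar⟫
      = ⟪lam, y - ystar⟫ + ν * ⟪v - ystar, y - ystar⟫ := by
    rw [inner_add_left, real_inner_smul_left]
  rw [hexp]
  refine aux_small _ _ (ν / 2 * ‖y - ystar‖ ^ 2) fun t ht0 ht1 => ?_
  have hyt : (1 - t) • ystar + t • y = ystar + t • (y - ystar) := by module
  have hcv : h (ystar + t • (y - ystar)) ≤ (1 - t) * h ystar + t * h y := by
    rw [← hyt]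
    exact hconv.2 (Set.mem_univ _) (Set.mem_univ _) (by linarith) (le_of_lt ht0) (by ring)
  have hmin := hys (ystar + t • (y - ystar))
  have hsub : v - (ystar + t • (y - ystar)) = (v - ystar) - t • (y - ystar) := by module
  rw [hsub] at hmin
  have hnorm : ‖(v - ystar) - t • (y - ystar)‖ ^ 2
      = ‖v - ystar‖ ^ 2 - 2 * (t * ⟪v - ystar, y - ystar⟫) + t ^ 2 * ‖y - ystar‖ ^ 2 := by
    rw [norm_sub_sq_real, real_inner_smul_right, norm_smul]
    rw [mul_pow, Real.norm_eq_abs, sq_abs]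
  have hinner : ⟪lam, (v - ystar) - t • (y - ystar)⟫
      = ⟪lam, v - ystar⟫ - t * ⟪lam, y - ystar⟫ := by
    rw [inner_sub_right, real_inner_smul_right]
  rw [hnorm, hinner] at hmin
  have step : t * (h ystar + (⟪lam, y - ystar⟫ + ν * ⟪v - ystar, y - ystar⟫))
      ≤ t * (h y + t * (ν / 2 * ‖y - ystar‖ ^ 2)) := by nlinarith
  exact le_of_mul_le_mul_left step ht0

/-- Strong duality: value of the envelope in terms of the prox point `P`. -/
private lemma aux_duality (h : E → ℝ) (hconv : ConvexOn ℝ Set.univ h)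
    (ν : ℝ) (hν : 0 < ν) (lam : E)
    (hstar : E → EReal)
    (hhstar : ∀ v, hstar v = ⨆ u : E, ((⟪u, v⟫ - h u : ℝ) : EReal))
    (P : E → E)
    (hP : ∀ z u, (ν : EReal) * hstar (P z) + ((1 / 2 * ‖z - P z‖ ^ 2 : ℝ) : EReal)
        ≤ (ν : EReal) * hstar u + ((1 / 2 * ‖z - u‖ ^ 2 : ℝ) : EReal))
    (v : E) :
    ∃ s : ℝ, hstar (P (ν • v + lam)) = (s : EReal) ∧
      (⨅ y : E, (h y + ⟪lam, v - y⟫ + ν / 2 * ‖v - y‖ ^ 2))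
        = ⟪v, P (ν • v + lam)⟫ - s - ‖P (ν • v + lam) - lam‖ ^ 2 / (2 * ν) := by
  obtain ⟨ystar, hys⟩ := aux_argmin h hconv ν hν lam v
  set z : E := ν • v + lam with hz
  set ustar : E := lam + ν • (v - ystar) with hustar
  have hopt := aux_opt h hconv ν hν lam v ystar hys
  set rstar : ℝ := ⟪ystar, ustar⟫ - h ystar with hrstar
  -- hstar ustar = rstar
  have hstar_ustar : hstar ustar = (rstar : EReal) := by
    apply le_antisymm
    · rw [hhstar]
      refine iSup_le fun y => ?_
      have h1 := hopt y
      have h2 : ⟪ustar, y - ystar⟫ = ⟪y, ustar⟫ - ⟪ystar, ustar⟫ := by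
        rw [inner_sub_right, real_inner_comm ustar y, real_inner_comm ustar ystar]
      rw [EReal.coe_le_coe_iff]; rw [h2] at h1; rw [hrstar]; linarith
    · rw [hhstar]
      exact le_iSup (fun y : E => ((⟪y, ustar⟫ - h y : ℝ) : EReal)) ystar
  -- `hstar (P z)` is a real number `s`
  have hlow : ((-(h 0) : ℝ) : EReal) ≤ hstar (P z) := by
    rw [hhstar]
    have := le_iSup (fun y : E => ((⟪y, P z⟫ - h y : ℝ) : EReal)) 0
    simpa using this
  set R : ℝ := ν * rstar + 1 / 2 * ‖z - ustar‖ ^ 2 with hR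
  have hub : (ν : EReal) * hstar (P z) ≤ (R : EReal) := by
    have h1 := hP z ustar
    rw [hstar_ustar] at h1
    have h2 : (ν : EReal) * (rstar : EReal) + ((1 / 2 * ‖z - ustar‖ ^ 2 : ℝ) : EReal)
        = (R : EReal) := by
      rw [← EReal.coe_mul, ← EReal.coe_add]
    have h3 : (ν : EReal) * hstar (P z)
        ≤ (ν : EReal) * hstar (P z) + ((1 / 2 * ‖z - P z‖ ^ 2 : ℝ) : EReal) :=
      le_add_of_nonneg_right (by exact_mod_cast (by positivity : (0:ℝ) ≤ 1 / 2 * ‖z - P z‖ ^ 2))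
    exact h3.trans (h1.trans_eq h2)
  have hne_top : hstar (P z) ≠ ⊤ := by
    intro hh
    rw [hh, EReal.mul_top_of_pos (by exact_mod_cast hν)] at hub
    exact (EReal.coe_ne_top R) (top_le_iff.mp hub)
  have hne_bot : hstar (P z) ≠ ⊥ := fun hh => by
    rw [hh] at hlow; exact absurd hlow (by simp)
  set s : ℝ := (hstar (P z)).toReal with hs
  have hPz : hstar (P z) = (s : EReal) := (EReal.coe_toReal hne_top hne_bot).symm
  refine ⟨s, hPz, ?_⟩
  -- real version of the prox inequality
  have hreal : ν * s + 1 / 2 * ‖z - P z‖ ^ 2 ≤ ν * rstar + 1 / 2 * ‖z - ustar‖ ^ 2 := by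
    have h1 := hP z ustar
    rw [hstar_ustar, hPz, ← EReal.coe_mul, ← EReal.coe_add, ← EReal.coe_mul,
      ← EReal.coe_add, EReal.coe_le_coe_iff] at h1
    exact h1
  -- quadratic expansions
  have hDq : ∀ u : E, ‖z - u‖ ^ 2
      = ν ^ 2 * ‖v‖ ^ 2 - 2 * (ν * (⟪v, u⟫ - ⟪v, lam⟫)) + ‖u - lam‖ ^ 2 := by
    intro u
    have h1 : z - u = ν • v - (u - lam) := by rw [hz]; module
    rw [h1, norm_sub_sq_real, real_inner_smul_left, inner_sub_right, norm_smul,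
      mul_pow, Real.norm_eq_abs, sq_abs]
  -- dual comparison: D(P z, s) ≥ D(ustar, rstar)
  have hcmp : ⟪v, ustar⟫ - rstar - ‖ustar - lam‖ ^ 2 / (2 * ν)
      ≤ ⟪v, P z⟫ - s - ‖P z - lam‖ ^ 2 / (2 * ν) := by
    have hmul : ν * (⟪v, ustar⟫ - rstar - ‖ustar - lam‖ ^ 2 / (2 * ν))
        ≤ ν * (⟪v, P z⟫ - s - ‖P z - lam‖ ^ 2 / (2 * ν)) := by
      have e1 := hDq ustar
      have e2 := hDq (P z)
      have key : ∀ (u : E) (r : ℝ), ν * (⟪v, u⟫ - r - ‖u - lam‖ ^ 2 / (2 * ν))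
          = (ν ^ 2 / 2 * ‖v‖ ^ 2 + ν * ⟪v, lam⟫) - (ν * r + 1 / 2 * ‖z - u‖ ^ 2) := by
        intro u r
        rw [hDq u]; field_simp; ring
      rw [key ustar rstar, key (P z) s]; linarith
    exact le_of_mul_le_mul_left hmul hν
  -- D(ustar, rstar) equals the primal optimal value
  have hval : ⟪v, ustar⟫ - rstar - ‖ustar - lam‖ ^ 2 / (2 * ν)
      = h ystar + ⟪lam, v - ystar⟫ + ν / 2 * ‖v - ystar‖ ^ 2 := by
    have e1 : ustar - lam = ν • (v - ystar) := by rw [hustar]; module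
    have e2 : ‖ustar - lam‖ ^ 2 = ν ^ 2 * ‖v - ystar‖ ^ 2 := by
      rw [e1, norm_smul, mul_pow, Real.norm_eq_abs, sq_abs]
    have e3 : ⟪v, ustar⟫ = ⟪v, lam⟫ + ν * ⟪v, v - ystar⟫ := by
      rw [hustar, inner_add_right, real_inner_smul_right]
    have e4 : rstar = ⟪ystar, lam⟫ + ν * ⟪ystar, v - ystar⟫ - h ystar := by
      rw [hrstar, hustar, inner_add_right, real_inner_smul_right]
    have e5 : ⟪v, v - ystar⟫ - ⟪ystar, v - ystar⟫ = ‖v - ystar‖ ^ 2 := by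
      rw [← inner_sub_left, real_inner_self_eq_norm_sq]
    have e6 : ⟪lam, v - ystar⟫ = ⟪v, lam⟫ - ⟪ystar, lam⟫ := by
      rw [real_inner_comm, inner_sub_left]
    have e7 : ‖ustar - lam‖ ^ 2 / (2 * ν) = ν / 2 * ‖v - ystar‖ ^ 2 := by
      rw [e2]; field_simp
    rw [e7, e3, e4, e6]; nlinarith [e5]
  -- conclude by sandwiching
  have hgeq : ⟪v, P z⟫ - s - ‖P z - lam‖ ^ 2 / (2 * ν)
      ≤ ⨅ y : E, (h y + ⟪lam, v - y⟫ + ν / 2 * ‖v - y‖ ^ 2) :=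
    aux_weak h ν hν lam hstar hhstar v (P z) s hPz
  have hbdd : BddBelow (Set.range fun y : E =>
      h y + ⟪lam, v - y⟫ + ν / 2 * ‖v - y‖ ^ 2) := by
    refine ⟨h ystar + ⟪lam, v - ystar⟫ + ν / 2 * ‖v - ystar‖ ^ 2, ?_⟩
    rintro _ ⟨y, rfl⟩; exact hys y
  have hleq : (⨅ y : E, (h y + ⟪lam, v - y⟫ + ν / 2 * ‖v - y‖ ^ 2))
      ≤ h ystar + ⟪lam, v - ystar⟫ + ν / 2 * ‖v - ystar‖ ^ 2 := ciInf_le hbdd ystar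
  have := hval ▸ hcmp
  linarith
/-- Monotonicity-type inequality for the prox map. -/
private lemma aux_mono (h : E → ℝ) (ν : ℝ) (hν : 0 < ν)
    (hstar : E → EReal)
    (hhstar : ∀ v, hstar v = ⨆ u : E, ((⟪u, v⟫ - h u : ℝ) : EReal))
    (P : E → E)
    (hP : ∀ z u, (ν : EReal) * hstar (P z) + ((1 / 2 * ‖z - P z‖ ^ 2 : ℝ) : EReal)
        ≤ (ν : EReal) * hstar u + ((1 / 2 * ‖z - u‖ ^ 2 : ℝ) : EReal))
    (z₁ z₂ : E) (s₁ s₂ : ℝ) (h₁ : hstar (P z₁) = (s₁ : EReal))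
    (h₂ : hstar (P z₂) = (s₂ : EReal)) :
    ⟪z₁ - P z₁, P z₂ - P z₁⟫ ≤ ν * (s₂ - s₁) := by
  have fen : ∀ (u : E) (r : ℝ), hstar u = (r : EReal) → ∀ y : E, ⟪y, u⟫ - h y ≤ r := by
    intro u r hur y
    have h1 : ((⟪y, u⟫ - h y : ℝ) : EReal) ≤ hstar u := by
      rw [hhstar]; exact le_iSup (fun y' : E => ((⟪y', u⟫ - h y' : ℝ) : EReal)) y
    rw [hur] at h1; exact_mod_cast h1
  refine aux_small _ _ (‖P z₂ - P z₁‖ ^ 2 / 2) fun t ht0 ht1 => ?_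
  set d : E := P z₂ - P z₁ with hd
  set mix : E := P z₁ + t • d with hmix
  -- convexity of hstar
  have hconv : hstar mix ≤ (((1 - t) * s₁ + t * s₂ : ℝ) : EReal) := by
    rw [hhstar]
    refine iSup_le fun y => ?_
    rw [EReal.coe_le_coe_iff]
    have f1 := fen (P z₁) s₁ h₁ y
    have f2 := fen (P z₂) s₂ h₂ y
    have e1 : ⟪y, mix⟫ = (1 - t) * ⟪y, P z₁⟫ + t * ⟪y, P z₂⟫ := by
      have : mix = (1 - t) • P z₁ + t • P z₂ := by rw [hmix, hd]; module
      rw [this, inner_add_right, real_inner_smul_right, real_inner_smul_right]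
    have m1 := mul_le_mul_of_nonneg_left f1 (by linarith : (0:ℝ) ≤ 1 - t)
    have m2 := mul_le_mul_of_nonneg_left f2 (le_of_lt ht0)
    rw [e1]; nlinarith
  -- prox inequality at z₁ with competitor mix, in real form
  have hub : (ν : EReal) * hstar mix + ((1 / 2 * ‖z₁ - mix‖ ^ 2 : ℝ) : EReal)
      ≤ ((ν * ((1 - t) * s₁ + t * s₂) + 1 / 2 * ‖z₁ - mix‖ ^ 2 : ℝ) : EReal) := by
    rw [EReal.coe_add, EReal.coe_mul]
    exact add_le_add_left (mul_le_mul_of_nonneg_left hconv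
      (by exact_mod_cast le_of_lt hν : (0 : EReal) ≤ (ν : EReal))) _
  have hreal : ν * s₁ + 1 / 2 * ‖z₁ - P z₁‖ ^ 2
      ≤ ν * ((1 - t) * s₁ + t * s₂) + 1 / 2 * ‖z₁ - mix‖ ^ 2 := by
    have h1 := (hP z₁ mix).trans hub
    rw [h₁, ← EReal.coe_mul, ← EReal.coe_add, EReal.coe_le_coe_iff] at h1
    exact h1
  have hnorm : ‖z₁ - mix‖ ^ 2
      = ‖z₁ - P z₁‖ ^ 2 - 2 * (t * ⟪z₁ - P z₁, d⟫) + t ^ 2 * ‖d‖ ^ 2 := by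
    have e1 : z₁ - mix = (z₁ - P z₁) - t • d := by rw [hmix]; module
    rw [e1, norm_sub_sq_real, real_inner_smul_right, norm_smul, mul_pow,
      Real.norm_eq_abs, sq_abs]
  rw [hnorm] at hreal
  have step : t * ⟪z₁ - P z₁, d⟫ ≤ t * (ν * (s₂ - s₁) + t * (‖d‖ ^ 2 / 2)) := by nlinarith
  exact le_of_mul_le_mul_left step ht0

/-- The prox map is nonexpansive (on points where `hstar ∘ P` is finite). -/
private lemma aux_lip (h : E → ℝ) (ν : ℝ) (hν : 0 < ν)
    (hstar : E → EReal)
    (hhstar : ∀ v, hstar v = ⨆ u : E, ((⟪u, v⟫ - h u : ℝ) : EReal))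
    (P : E → E)
    (hP : ∀ z u, (ν : EReal) * hstar (P z) + ((1 / 2 * ‖z - P z‖ ^ 2 : ℝ) : EReal)
        ≤ (ν : EReal) * hstar u + ((1 / 2 * ‖z - u‖ ^ 2 : ℝ) : EReal))
    (z₁ z₂ : E) (s₁ s₂ : ℝ) (h₁ : hstar (P z₁) = (s₁ : EReal))
    (h₂ : hstar (P z₂) = (s₂ : EReal)) :
    ‖P z₁ - P z₂‖ ≤ ‖z₁ - z₂‖ := by
  have m1 := aux_mono h ν hν hstar hhstar P hP z₁ z₂ s₁ s₂ h₁ h₂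
  have m2 := aux_mono h ν hν hstar hhstar P hP z₂ z₁ s₂ s₁ h₂ h₁
  set d : E := P z₂ - P z₁ with hd
  have e1 : P z₁ - P z₂ = -d := by rw [hd]; module
  have e2 : ⟪z₂ - P z₂, P z₁ - P z₂⟫ = -⟪z₂ - P z₂, d⟫ := by
    rw [e1, inner_neg_right]
  rw [e2] at m2
  -- add: ⟪z₁ - z₂ + (P z₂ - P z₁), d⟫ ≤ 0
  have key : ‖d‖ ^ 2 ≤ ⟪z₂ - z₁, d⟫ := by
    have a1 : ⟪z₁ - P z₁, d⟫ - ⟪z₂ - P z₂, d⟫ ≤ 0 := by linarith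
    have a2 : ⟪z₁ - P z₁, d⟫ - ⟪z₂ - P z₂, d⟫ = ⟪z₁ - z₂, d⟫ + ⟪P z₂ - P z₁, d⟫ := by
      rw [← inner_sub_left, ← inner_add_left]
      congr 1
      module
    have a3 : ⟪P z₂ - P z₁, d⟫ = ‖d‖ ^ 2 := by rw [hd, real_inner_self_eq_norm_sq]
    have a4 : ⟪z₂ - z₁, d⟫ = -⟪z₁ - z₂, d⟫ := by
      rw [show z₂ - z₁ = -(z₁ - z₂) by module, inner_neg_left]
    rw [a2, a3] at a1; rw [a4]; linarith
  have cs : ⟪z₂ - z₁, d⟫ ≤ ‖z₂ - z₁‖ * ‖d‖ := real_inner_le_norm _ _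
  rcases eq_or_lt_of_le (norm_nonneg d) with hd0 | hd0
  · have hdz : ‖P z₁ - P z₂‖ = ‖d‖ := by rw [hd, norm_sub_rev]
    rw [hdz, ← hd0]
    exact norm_nonneg _
  · have h1 : ‖d‖ * ‖d‖ ≤ ‖z₂ - z₁‖ * ‖d‖ := by nlinarith
    have h2 : ‖d‖ ≤ ‖z₂ - z₁‖ := le_of_mul_le_mul_right h1 hd0
    rw [show ‖P z₁ - P z₂‖ = ‖d‖ by rw [hd, norm_sub_rev], show ‖z₁ - z₂‖ = ‖z₂ - z₁‖ from
      norm_sub_rev _ _]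
    exact h2
/-- Subgradient inequality for the envelope. -/
private lemma aux_env_grad (h : E → ℝ) (hconv : ConvexOn ℝ Set.univ h)
    (ν : ℝ) (hν : 0 < ν) (lam : E)
    (hstar : E → EReal)
    (hhstar : ∀ v, hstar v = ⨆ u : E, ((⟪u, v⟫ - h u : ℝ) : EReal))
    (P : E → E)
    (hP : ∀ z u, (ν : EReal) * hstar (P z) + ((1 / 2 * ‖z - P z‖ ^ 2 : ℝ) : EReal)
        ≤ (ν : EReal) * hstar u + ((1 / 2 * ‖z - u‖ ^ 2 : ℝ) : EReal))
    (v w : E) :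
    (⨅ y : E, (h y + ⟪lam, v - y⟫ + ν / 2 * ‖v - y‖ ^ 2))
        + ⟪P (ν • v + lam), w - v⟫
      ≤ ⨅ y : E, (h y + ⟪lam, w - y⟫ + ν / 2 * ‖w - y‖ ^ 2) := by
  obtain ⟨s, hs, hev⟩ := aux_duality h hconv ν hν lam hstar hhstar P hP v
  have hw := aux_weak h ν hν lam hstar hhstar w (P (ν • v + lam)) s hs
  rw [hev]
  have e1 : ⟪P (ν • v + lam), w - v⟫ = ⟪w, P (ν • v + lam)⟫ - ⟪v, P (ν • v + lam)⟫ := by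
    rw [real_inner_comm, inner_sub_left]
  linarith

/-- Quadratic sandwich for the envelope. -/
private lemma aux_env_sandwich (h : E → ℝ) (hconv : ConvexOn ℝ Set.univ h)
    (ν : ℝ) (hν : 0 < ν) (lam : E)
    (hstar : E → EReal)
    (hhstar : ∀ v, hstar v = ⨆ u : E, ((⟪u, v⟫ - h u : ℝ) : EReal))
    (P : E → E)
    (hP : ∀ z u, (ν : EReal) * hstar (P z) + ((1 / 2 * ‖z - P z‖ ^ 2 : ℝ) : EReal)
        ≤ (ν : EReal) * hstar u + ((1 / 2 * ‖z - u‖ ^ 2 : ℝ) : EReal))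
    (v w : E) :
    0 ≤ (⨅ y : E, (h y + ⟪lam, w - y⟫ + ν / 2 * ‖w - y‖ ^ 2))
        - (⨅ y : E, (h y + ⟪lam, v - y⟫ + ν / 2 * ‖v - y‖ ^ 2))
        - ⟪P (ν • v + lam), w - v⟫
      ∧ (⨅ y : E, (h y + ⟪lam, w - y⟫ + ν / 2 * ‖w - y‖ ^ 2))
        - (⨅ y : E, (h y + ⟪lam, v - y⟫ + ν / 2 * ‖v - y‖ ^ 2))
        - ⟪P (ν • v + lam), w - v⟫ ≤ ν * ‖w - v‖ ^ 2 := by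
  have g1 := aux_env_grad h hconv ν hν lam hstar hhstar P hP v w
  have g2 := aux_env_grad h hconv ν hν lam hstar hhstar P hP w v
  refine ⟨by linarith, ?_⟩
  obtain ⟨s₁, hs₁, -⟩ := aux_duality h hconv ν hν lam hstar hhstar P hP v
  obtain ⟨s₂, hs₂, -⟩ := aux_duality h hconv ν hν lam hstar hhstar P hP w
  have hl := aux_lip h ν hν hstar hhstar P hP (ν • w + lam) (ν • v + lam) s₂ s₁ hs₂ hs₁
  have hzz : ‖(ν • w + lam) - (ν • v + lam)‖ = ν * ‖w - v‖ := by
    rw [show (ν • w + lam) - (ν • v + lam) = ν • (w - v) by module, norm_smul,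
      Real.norm_eq_abs, abs_of_pos hν]
  rw [hzz] at hl
  have e2 : ⟪P (ν • w + lam), v - w⟫ = -⟪P (ν • w + lam), w - v⟫ := by
    rw [show v - w = -(w - v) by module, inner_neg_right]
  rw [e2] at g2
  have e3 : ⟪P (ν • w + lam), w - v⟫ - ⟪P (ν • v + lam), w - v⟫
      = ⟪P (ν • w + lam) - P (ν • v + lam), w - v⟫ := by rw [inner_sub_left]
  have cs : ⟪P (ν • w + lam) - P (ν • v + lam), w - v⟫
      ≤ ‖P (ν • w + lam) - P (ν • v + lam)‖ * ‖w - v‖ := real_inner_le_norm _ _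
  have hb : ‖P (ν • w + lam) - P (ν • v + lam)‖ * ‖w - v‖ ≤ (ν * ‖w - v‖) * ‖w - v‖ :=
    mul_le_mul_of_nonneg_right hl (norm_nonneg _)
  nlinarith [norm_nonneg (w - v)]

set_option maxHeartbeats 1000000 in
/-- Let `f : ℝⁿ → ℝ` be a convex differentiable function (with gradient `f'`),
`h : ℝᵐ → ℝ` a closed convex function, `A ∈ ℝ^{m×n}`, `ν > 0`, `lam ∈ ℝᵐ`.
Define `φ₁(x) := f(x) + min_y { h(y) + ⟨lam, Ax − y⟩ + (ν/2)‖Ax − y‖² }`.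
Then `φ₁` is differentiable and `∇φ₁(x) = ∇f(x) + Aᵀ prox_{νh*}(νAx + lam)`.
Here `h* : ℝᵐ → ℝ ∪ {+∞}` is the Fenchel conjugate (valued in `EReal`), and
`P z = prox_{νh*}(z)` is encoded as the minimizer of `u ↦ ν·h*(u) + ½‖z − u‖²`. -/
theorem statement0 {n m : ℕ}
    (f : EuclideanSpace ℝ (Fin n) → ℝ)
    (f' : EuclideanSpace ℝ (Fin n) → EuclideanSpace ℝ (Fin n))
    (hfconv : ConvexOn ℝ Set.univ f)
    (hfdiff : ∀ x, HasGradientAt f (f' x) x)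
    (h : EuclideanSpace ℝ (Fin m) → ℝ)
    (hhconv : ConvexOn ℝ Set.univ h)
    (hhclosed : ∀ α : ℝ, IsClosed {y | h y ≤ α})
    (A : Matrix (Fin m) (Fin n) ℝ)
    (ν : ℝ) (hν : 0 < ν)
    (lam : EuclideanSpace ℝ (Fin m))
    -- `hstar` is the Fenchel conjugate of `h`
    (hstar : EuclideanSpace ℝ (Fin m) → EReal)
    (hhstar : ∀ v, hstar v = ⨆ u : EuclideanSpace ℝ (Fin m), ((⟪u, v⟫ - h u : ℝ) : EReal))
    -- `P` is the proximal map of `ν · h*`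
    (P : EuclideanSpace ℝ (Fin m) → EuclideanSpace ℝ (Fin m))
    (hP : ∀ z u, (ν : EReal) * hstar (P z) + ((1 / 2 * ‖z - P z‖ ^ 2 : ℝ) : EReal)
        ≤ (ν : EReal) * hstar u + ((1 / 2 * ‖z - u‖ ^ 2 : ℝ) : EReal))
    -- `φ` is the function `φ₁`
    (φ : EuclideanSpace ℝ (Fin n) → ℝ)
    (hφ : ∀ x, φ x = f x + ⨅ y : EuclideanSpace ℝ (Fin m),
        (h y + ⟪lam, Matrix.toEuclideanLin A x - y⟫
          + ν / 2 * ‖Matrix.toEuclideanLin A x - y‖ ^ 2)) :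
    ∀ x, HasGradientAt φ
      (f' x + Matrix.toEuclideanLin Aᵀ (P (ν • Matrix.toEuclideanLin A x + lam))) x := by
  intro x
  set T : EuclideanSpace ℝ (Fin n) →ₗ[ℝ] EuclideanSpace ℝ (Fin m) :=
    Matrix.toEuclideanLin A with hT
  set env : EuclideanSpace ℝ (Fin m) → ℝ :=
    fun v => ⨅ y : EuclideanSpace ℝ (Fin m),
      (h y + ⟪lam, v - y⟫ + ν / 2 * ‖v - y‖ ^ 2) with henv
  have hφ' : φ = fun x' => f x' + env (T x') := funext fun x' => by rw [hφ]
  set u : EuclideanSpace ℝ (Fin n) := Matrix.toEuclideanLin Aᵀ (P (ν • T x + lam)) with hu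
  have hadj : ∀ (p : EuclideanSpace ℝ (Fin m)) (d : EuclideanSpace ℝ (Fin n)),
      ⟪Matrix.toEuclideanLin Aᵀ p, d⟫ = ⟪p, T d⟫ := by
    intro p d
    rw [show Aᵀ = Aᴴ from (Matrix.conjTranspose_eq_transpose_of_trivial A).symm,
      Matrix.toEuclideanLin_conjTranspose_eq_adjoint]
    exact LinearMap.adjoint_inner_left T d p
  rw [hasGradientAt_iff_hasFDerivAt]
  have hfd : HasFDerivAt f
      ((InnerProductSpace.toDual ℝ (EuclideanSpace ℝ (Fin n))) (f' x)) x :=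
    (hfdiff x).hasFDerivAt
  have hψ : HasFDerivAt (fun x' => env (T x'))
      ((InnerProductSpace.toDual ℝ (EuclideanSpace ℝ (Fin n))) u) x := by
    rw [hasFDerivAt_iff_isLittleO_nhds_zero]
    set Tc := LinearMap.toContinuousLinearMap T with hTc
    set C : ℝ := ‖Tc‖ with hC
    have hTb : ∀ d, ‖T d‖ ≤ C * ‖d‖ := fun d => Tc.le_opNorm d
    have hbound : ∀ d, |env (T (x + d)) - env (T x) - ⟪P (ν • T x + lam), T d⟫|
        ≤ ν * ‖T d‖ ^ 2 := by
      intro d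
      have hsw := aux_env_sandwich h hhconv ν hν lam hstar hhstar P hP (T x) (T (x + d))
      have e1 : T (x + d) - T x = T d := by rw [map_add]; abel
      rw [e1] at hsw
      rw [abs_le]
      exact ⟨by linarith [hsw.1], hsw.2⟩
    refine Asymptotics.isLittleO_iff.mpr fun ε hε => ?_
    have hδ : (0 : ℝ) < ε / (ν * C ^ 2 + 1) := by
      have hC0 : (0 : ℝ) ≤ C := norm_nonneg _
      positivity
    filter_upwards [Metric.ball_mem_nhds (0 : EuclideanSpace ℝ (Fin n)) hδ] with d hd
    rw [Metric.mem_ball, dist_zero_right] at hd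
    have h1 := hbound d
    have h2 : ν * ‖T d‖ ^ 2 ≤ ν * (C * ‖d‖) ^ 2 :=
      mul_le_mul_of_nonneg_left (pow_le_pow_left₀ (norm_nonneg _) (hTb d) 2) (le_of_lt hν)
    have happ : (InnerProductSpace.toDual ℝ (EuclideanSpace ℝ (Fin n))) u d
        = ⟪P (ν • T x + lam), T d⟫ := by
      rw [InnerProductSpace.toDual_apply_apply, hu, hadj]
    simp only [happ]
    simp only [Real.norm_eq_abs]
    have hC0 : (0 : ℝ) ≤ C := norm_nonneg _
    have hd0 : (0 : ℝ) ≤ ‖d‖ := norm_nonneg _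
    have key : ν * (C * ‖d‖) ^ 2 ≤ ε * ‖d‖ := by
      have e1 : ν * (C * ‖d‖) ^ 2 = (ν * C ^ 2 * ‖d‖) * ‖d‖ := by ring
      rw [e1]
      apply mul_le_mul_of_nonneg_right _ hd0
      have h3 : ν * C ^ 2 * ‖d‖ ≤ ν * C ^ 2 * (ε / (ν * C ^ 2 + 1)) := by
        apply mul_le_mul_of_nonneg_left (le_of_lt hd) (by positivity)
      have h4 : ν * C ^ 2 * (ε / (ν * C ^ 2 + 1)) ≤ ε := by
        rw [mul_div_assoc', div_le_iff₀ (by positivity)]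
        nlinarith
      calc ν * C ^ 2 * ‖d‖ ≤ _ := h3
      _ ≤ ε := h4
    calc |env (T (x + d)) - env (T x) - ⟪P (ν • T x + lam), T d⟫| ≤ ν * ‖T d‖ ^ 2 := h1
    _ ≤ ν * (C * ‖d‖) ^ 2 := h2
    _ ≤ ε * ‖d‖ := key
  have hmap : (InnerProductSpace.toDual ℝ (EuclideanSpace ℝ (Fin n))) (f' x + u)
      = (InnerProductSpace.toDual ℝ (EuclideanSpace ℝ (Fin n))) (f' x)
        + (InnerProductSpace.toDual ℝ (EuclideanSpace ℝ (Fin n))) u := map_add _ _ _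
  rw [hφ', hmap]
  exact hfd.add hψ
end

section
/- Let f : ℝⁿ → ℝ be convex and differentiable with ∇f Lipschitz continuous with constant L_f > 0, let h : ℝᵐ → ℝ be closed convex, A ∈ ℝ^{m×n}, ν > 0, λ ∈ ℝᵐ, and define φ₁(x) := f(x) + min_{y∈ℝᵐ} { h(y) + ⟨λ, Ax − y⟩ + (ν/2)‖Ax − y‖² }. Then ∇φ₁ is Lipschitz continuous with constant L_f + ν·λ_max(AᵀA), i.e. for all x₁, x₂ ∈ ℝⁿ, ‖∇φ₁(x₁) − ∇φ₁(x₂)‖ ≤ (L_f + ν·λ_max(AᵀA))‖x₁ − x₂‖. -/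
open scoped RealInnerProductSpace Matrix


section helpers
variable {E : Type*} [NormedAddCommGroup E] [InnerProductSpace ℝ E]

lemma combo_norm_sq (a b : ℝ) (hab : a + b = 1) (u v : E) :
    ‖a • u + b • v‖ ^ 2 = a * ‖u‖ ^ 2 + b * ‖v‖ ^ 2 - a * b * ‖u - v‖ ^ 2 := by
  have h1 : ∀ w : E, ‖w‖ ^ 2 = ⟪w, w⟫ := fun w => (real_inner_self_eq_norm_sq w).symm
  rw [h1, h1, h1, h1]
  simp only [inner_add_add_self, inner_sub_sub_self, real_inner_smul_left,
    real_inner_smul_right]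
  linear_combination (a * ⟪u,u⟫ + b * ⟪v,v⟫) * hab

variable [CompleteSpace E]

lemma gradsq (c : ℝ) (x : E) :
    HasGradientAt (fun y : E => c / 2 * ‖y‖ ^ 2) (c • x) x := by
  rw [hasGradientAt_iff_hasFDerivAt]
  have h := ((hasStrictFDerivAt_norm_sq x).hasFDerivAt).const_mul (c / 2)
  refine h.congr_fderiv ?_
  ext y
  simp [InnerProductSpace.toDual_apply_apply, real_inner_smul_left, two_smul]
  ring

lemma st2_lineDeriv (ψ : E → ℝ) (ψ' : E → E) (hdiff : ∀ x, HasGradientAt ψ (ψ' x) x)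
    (x d : E) (t : ℝ) :
    HasDerivAt (fun s : ℝ => ψ (x + s • d)) ⟪ψ' (x + t • d), d⟫ t := by
  have hline : HasDerivAt (fun s : ℝ => x + s • d) d t := by
    simpa using ((hasDerivAt_id t).smul_const d).const_add x
  have hg := (hdiff (x + t • d)).hasFDerivAt.comp_hasDerivAt t hline
  simp [InnerProductSpace.toDual_apply_apply] at hg
  exact hg

end helpers

section fo
variable {E : Type*} [NormedAddCommGroup E] [InnerProductSpace ℝ E] [CompleteSpace E]

/-- convex + gradient ⇒ first order lower bound -/
lemma st2_convex_fo (ψ : E → ℝ) (ψ' : E → E) (hconv : ConvexOn ℝ Set.univ ψ)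
    (hdiff : ∀ x, HasGradientAt ψ (ψ' x) x) (x y : E) :
    ψ x + ⟪ψ' x, y - x⟫ ≤ ψ y := by
  set d := y - x with hd
  have hw0 : HasDerivAt (fun s : ℝ => ψ (x + s • d)) ⟪ψ' x, d⟫ 0 := by
    simpa using st2_lineDeriv ψ ψ' hdiff x d 0
  have htend := hasDerivAt_iff_tendsto_slope.mp hw0
  have hmono : (nhdsWithin (0:ℝ) (Set.Ioi 0)) ≤ nhdsWithin (0:ℝ) {(0:ℝ)}ᶜ :=
    nhdsWithin_mono 0 (fun t ht => ne_of_gt ht)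
  have hslope : ∀ t ∈ Set.Ioc (0:ℝ) 1, slope (fun s : ℝ => ψ (x + s • d)) 0 t ≤ ψ y - ψ x := by
    intro t ht
    have h1 : x + t • d = (1 - t) • x + t • y := by
      rw [hd]; module
    have h2 : ψ ((1 - t) • x + t • y) ≤ (1 - t) * ψ x + t * ψ y :=
      hconv.2 (Set.mem_univ x) (Set.mem_univ y) (by linarith [ht.2]) (le_of_lt ht.1) (by ring)
    rw [slope_def_field]
    simp only [sub_zero]
    rw [div_le_iff₀ ht.1]
    calc ψ (x + t • d) - ψ (x + (0:ℝ) • d) = ψ ((1-t) • x + t • y) - ψ x := by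
          rw [h1]; simp
      _ ≤ (1 - t) * ψ x + t * ψ y - ψ x := by linarith
      _ = (ψ y - ψ x) * t := by ring
  have hle : ⟪ψ' x, d⟫ ≤ ψ y - ψ x := by
    refine le_of_tendsto (htend.mono_left hmono) ?_
    filter_upwards [Ioc_mem_nhdsGT_of_mem (Set.mem_Ico.2 ⟨le_refl (0:ℝ), one_pos⟩)] with t ht
    exact hslope t ht
  linarith

/-- monotone gradient ⇒ first order lower bound -/
lemma st2_mono_fo (ψ : E → ℝ) (ψ' : E → E)
    (hdiff : ∀ x, HasGradientAt ψ (ψ' x) x)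
    (hmono : ∀ u v, 0 ≤ ⟪ψ' u - ψ' v, u - v⟫) (x y : E) :
    ψ x + ⟪ψ' x, y - x⟫ ≤ ψ y := by
  set d := y - x with hd
  set w := fun s : ℝ => ψ (x + s • d) with hw
  set g := fun s : ℝ => ⟪ψ' (x + s • d), d⟫ with hg
  have hder : ∀ t : ℝ, HasDerivAt w (g t) t := fun t => st2_lineDeriv ψ ψ' hdiff x d t
  have hcont : ContinuousOn w (Set.Icc 0 1) :=
    fun t _ => (hder t).continuousAt.continuousWithinAt
  obtain ⟨c, hc, hceq⟩ := exists_hasDerivAt_eq_slope w g one_pos hcont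
    (fun t _ => hder t)
  have h10 : w 1 - w 0 = ψ y - ψ x := by
    simp [hw, hd]
  have hgc : g 0 ≤ g c := by
    have := hmono (x + c • d) x
    have hxx : (x + c • d) - x = c • d := by abel
    rw [hxx, inner_sub_left, real_inner_smul_right, real_inner_smul_right] at this
    have hc0 : 0 < c := hc.1
    simp only [hg, zero_smul, add_zero]
    nlinarith
  have hg0 : g 0 = ⟪ψ' x, d⟫ := by simp [hg]
  rw [hceq] at hgc
  simp only [div_one, sub_zero] at hgc
  rw [hg0] at hgc
  linarith [h10 ▸ hgc]

/-- first order lower bound ⇒ convex -/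
lemma st2_fo_convex (ψ : E → ℝ) (ψ' : E → E)
    (hfo : ∀ x y, ψ x + ⟪ψ' x, y - x⟫ ≤ ψ y) :
    ConvexOn ℝ Set.univ ψ := by
  refine ⟨convex_univ, fun x _ y _ a b ha hb hab => ?_⟩
  set z := a • x + b • y with hz
  have h1 := hfo z x
  have h2 := hfo z y
  have hzero : a • (x - z) + b • (y - z) = 0 := by
    have h' : a • (x - z) + b • (y - z) = (a • x + b • y) - (a + b) • z := by module
    rw [h', hab, one_smul, ← hz, sub_self]
  have hinner : a * ⟪ψ' z, x - z⟫ + b * ⟪ψ' z, y - z⟫ = 0 := by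
    rw [← real_inner_smul_right, ← real_inner_smul_right, ← inner_add_right, hzero,
      inner_zero_right]
  have h1a := mul_le_mul_of_nonneg_left h1 ha
  have h2b := mul_le_mul_of_nonneg_left h2 hb
  simp only [smul_eq_mul]
  have hsum : (a + b) * ψ z ≤ a * ψ x + b * ψ y := by ring_nf; ring_nf at h1a h2b hinner; linarith
  rw [hab, one_mul] at hsum
  exact hsum
end fo

section env
variable {F : Type*} [NormedAddCommGroup F] [InnerProductSpace ℝ F] [FiniteDimensional ℝ F]

lemma st2_h_lower (h : F → ℝ) (hh : ConvexOn ℝ Set.univ h) :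
    ∃ C : ℝ, 0 ≤ C ∧ ∀ y : F, -(C * (1 + ‖y‖)) ≤ h y := by
  have hcont : Continuous h := hh.locallyLipschitz.continuous
  obtain ⟨C₀, hC₀⟩ := (isCompact_closedBall (0:F) 1).exists_bound_of_continuousOn
    hcont.continuousOn
  have hC₀0 : 0 ≤ C₀ := le_trans (norm_nonneg _) (hC₀ 0 (by simp))
  refine ⟨2 * C₀, by linarith, fun y => ?_⟩
  by_cases hy : ‖y‖ ≤ 1
  · have := hC₀ y (by simpa [Metric.mem_closedBall] using hy)
    have h1 : -C₀ ≤ h y := by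
      have := abs_le.1 (by simpa [Real.norm_eq_abs] using this)
      linarith [this.1]
    nlinarith [norm_nonneg y]
  · push_neg at hy
    set t : ℝ := 1 / ‖y‖ with ht
    have hy0 : 0 < ‖y‖ := by linarith
    have ht0 : 0 < t := by positivity
    have ht1 : t < 1 := by rw [ht, div_lt_one hy0]; exact hy
    have hyt : ‖y‖ * t = 1 := by rw [ht]; field_simp
    have hu : h (t • y) ≤ t * h y + (1 - t) * h 0 := by
      have := hh.2 (Set.mem_univ y) (Set.mem_univ (0:F)) ht0.le
        (le_of_lt (by linarith : (0:ℝ) < 1 - t)) (by ring : t + (1 - t) = 1)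
      simpa [smul_eq_mul] using this
    have hub : ‖t • y‖ ≤ 1 := by
      rw [norm_smul, Real.norm_eq_abs, abs_of_pos ht0]
      nlinarith
    have h2 := hC₀ (t • y) (by simpa [Metric.mem_closedBall] using hub)
    have h3 := hC₀ 0 (by simp)
    have h2' : -C₀ ≤ h (t • y) := by
      have := abs_le.1 (by simpa [Real.norm_eq_abs] using h2); linarith [this.1]
    have h3' : h 0 ≤ C₀ := by
      have := abs_le.1 (by simpa [Real.norm_eq_abs] using h3); linarith [this.2]
    -- -C₀ ≤ t * h y + (1-t) * C₀  ⇒  h y ≥ (-C₀ - (1-t)C₀)/t ≥ -2C₀/t = -2C₀‖y‖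
    have key : -(2 * C₀) ≤ t * h y := by nlinarith
    have hkeymul := mul_le_mul_of_nonneg_left key hy0.le
    have heq : ‖y‖ * (t * h y) = h y := by
      rw [← mul_assoc, hyt, one_mul]
    rw [heq] at hkeymul
    nlinarith

lemma st2_env_bdd (h : F → ℝ) (hh : ConvexOn ℝ Set.univ h) (lam : F) (ν : ℝ) (hν : 0 < ν)
    (z : F) :
    BddBelow (Set.range fun y : F => h y + ⟪lam, z - y⟫ + ν / 2 * ‖z - y‖ ^ 2) := by
  obtain ⟨C, hC0, hC⟩ := st2_h_lower h hh
  refine ⟨-(C * (1 + ‖z‖)) - (C + ‖lam‖) ^ 2 / (2 * ν), ?_⟩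
  rintro r ⟨y, rfl⟩
  have h1 : -(C * (1 + ‖y‖)) ≤ h y := hC y
  have h2 : -(‖lam‖ * ‖z - y‖) ≤ ⟪lam, z - y⟫ := neg_le_of_neg_le (by
    have := abs_real_inner_le_norm lam (z - y)
    have := abs_le.1 this
    linarith [this.1])
  have h3 : ‖y‖ ≤ ‖z‖ + ‖z - y‖ := by
    calc ‖y‖ = ‖z - (z - y)‖ := by congr 1; abel
      _ ≤ ‖z‖ + ‖z - y‖ := norm_sub_le _ _
  set s := ‖z - y‖ with hs
  have hs0 : 0 ≤ s := norm_nonneg _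
  have hbound : -(C * (1 + ‖z‖)) - (C + ‖lam‖) * s + ν / 2 * s ^ 2
      ≤ h y + ⟪lam, z - y⟫ + ν / 2 * s ^ 2 := by nlinarith
  have hquad : -((C + ‖lam‖) ^ 2 / (2 * ν)) ≤ -(C + ‖lam‖) * s + ν / 2 * s ^ 2 := by
    rw [neg_le_iff_add_nonneg]
    have hne : (0:ℝ) < 2 * ν := by linarith
    have : (C + ‖lam‖) ^ 2 / (2 * ν) - (C + ‖lam‖) * s + ν / 2 * s ^ 2
        = (ν / 2) * (s - (C + ‖lam‖) / ν) ^ 2 := by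
      field_simp
      ring
    nlinarith [sq_nonneg (s - (C + ‖lam‖) / ν), div_nonneg (sq_nonneg (C + ‖lam‖)) hne.le]
  linarith
end env

section envconv
variable {E : Type*} [NormedAddCommGroup E] [InnerProductSpace ℝ E]
variable {F : Type*} [NormedAddCommGroup F] [InnerProductSpace ℝ F] [FiniteDimensional ℝ F]

/-- pointwise convexity inequality for the integrand -/
lemma st2_q_combo (h : F → ℝ) (hh : ConvexOn ℝ Set.univ h) (lam : F) (ν : ℝ) (hν : 0 < ν)
    (T : E →ₗ[ℝ] F) (a b : ℝ) (ha : 0 ≤ a) (hb : 0 ≤ b) (hab : a + b = 1)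
    (x₁ x₂ : E) (y₁ y₂ : F) :
    h (a • y₁ + b • y₂) + ⟪lam, T (a • x₁ + b • x₂) - (a • y₁ + b • y₂)⟫
      + ν / 2 * ‖T (a • x₁ + b • x₂) - (a • y₁ + b • y₂)‖ ^ 2
    ≤ a * (h y₁ + ⟪lam, T x₁ - y₁⟫ + ν / 2 * ‖T x₁ - y₁‖ ^ 2)
      + b * (h y₂ + ⟪lam, T x₂ - y₂⟫ + ν / 2 * ‖T x₂ - y₂‖ ^ 2) := by
  have hcombo : T (a • x₁ + b • x₂) - (a • y₁ + b • y₂)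
      = a • (T x₁ - y₁) + b • (T x₂ - y₂) := by
    rw [map_add, map_smul, map_smul]; module
  rw [hcombo]
  have hh' : h (a • y₁ + b • y₂) ≤ a * h y₁ + b * h y₂ := by
    simpa [smul_eq_mul] using hh.2 (Set.mem_univ y₁) (Set.mem_univ y₂) ha hb hab
  have hinner : ⟪lam, a • (T x₁ - y₁) + b • (T x₂ - y₂)⟫
      = a * ⟪lam, T x₁ - y₁⟫ + b * ⟪lam, T x₂ - y₂⟫ := by
    rw [inner_add_right, real_inner_smul_right, real_inner_smul_right]
  have hnorm := combo_norm_sq a b hab (T x₁ - y₁) (T x₂ - y₂)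
  have hab2 : 0 ≤ a * b := mul_nonneg ha hb
  nlinarith [mul_nonneg (mul_nonneg hν.le hab2) (sq_nonneg ‖(T x₁ - y₁) - (T x₂ - y₂)‖)]

lemma st2_envT_convex (h : F → ℝ) (hh : ConvexOn ℝ Set.univ h) (lam : F) (ν : ℝ) (hν : 0 < ν)
    (T : E →ₗ[ℝ] F) :
    ConvexOn ℝ Set.univ (fun x : E => ⨅ y : F,
      (h y + ⟪lam, T x - y⟫ + ν / 2 * ‖T x - y‖ ^ 2)) := by
  refine ⟨convex_univ, fun x₁ _ x₂ _ a b ha hb hab => ?_⟩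
  simp only [smul_eq_mul]
  set q : E → F → ℝ := fun x y => h y + ⟪lam, T x - y⟫ + ν / 2 * ‖T x - y‖ ^ 2 with hq
  have bdd : ∀ x : E, BddBelow (Set.range fun y : F => q x y) :=
    fun x => st2_env_bdd h hh lam ν hν (T x)
  rcases eq_or_lt_of_le ha with ha0 | ha0
  · have hb1 : b = 1 := by linarith
    have hz : a • x₁ + b • x₂ = x₂ := by rw [← ha0, hb1]; simp
    rw [hz, ← ha0, hb1]; simp
  rcases eq_or_lt_of_le hb with hb0 | hb0
  · have ha1 : a = 1 := by linarith
    have hz : a • x₁ + b • x₂ = x₁ := by rw [← hb0, ha1]; simp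
    rw [hz, ← hb0, ha1]; simp
  set z := a • x₁ + b • x₂ with hzdef
  have key : ∀ y₁ y₂ : F, q z (a • y₁ + b • y₂) ≤ a * q x₁ y₁ + b * q x₂ y₂ :=
    fun y₁ y₂ => st2_q_combo h hh lam ν hν T a b ha hb hab x₁ x₂ y₁ y₂
  have step1 : ∀ y₂ : F, (⨅ y, q z y) ≤ a * (⨅ y, q x₁ y) + b * q x₂ y₂ := by
    intro y₂
    have h1 : ∀ y₁ : F, ((⨅ y, q z y) - b * q x₂ y₂) / a ≤ q x₁ y₁ := by
      intro y₁
      rw [div_le_iff₀ ha0]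
      have hle := ciInf_le (bdd z) (a • y₁ + b • y₂)
      have := key y₁ y₂
      nlinarith
    have h2 := le_ciInf h1
    rw [div_le_iff₀ ha0] at h2
    nlinarith
  have h3 : ∀ y₂ : F, ((⨅ y, q z y) - a * (⨅ y, q x₁ y)) / b ≤ q x₂ y₂ := by
    intro y₂
    rw [div_le_iff₀ hb0]
    have := step1 y₂
    nlinarith
  have h4 := le_ciInf h3
  rw [div_le_iff₀ hb0] at h4
  nlinarith

lemma st2_envT_reverse (h : F → ℝ) (hh : ConvexOn ℝ Set.univ h) (lam : F) (ν μ : ℝ)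
    (hν : 0 < ν) (T : E →ₗ[ℝ] F) (hT : ∀ x : E, ‖T x‖ ^ 2 ≤ μ * ‖x‖ ^ 2)
    (a b : ℝ) (ha : 0 ≤ a) (hb : 0 ≤ b) (hab : a + b = 1) (x₁ x₂ : E) :
    a * (⨅ y : F, (h y + ⟪lam, T x₁ - y⟫ + ν / 2 * ‖T x₁ - y‖ ^ 2))
      + b * (⨅ y : F, (h y + ⟪lam, T x₂ - y⟫ + ν / 2 * ‖T x₂ - y‖ ^ 2))
      - ν * μ / 2 * (a * b * ‖x₁ - x₂‖ ^ 2)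
    ≤ ⨅ y : F, (h y + ⟪lam, T (a • x₁ + b • x₂) - y⟫
        + ν / 2 * ‖T (a • x₁ + b • x₂) - y‖ ^ 2) := by
  set q : E → F → ℝ := fun x y => h y + ⟪lam, T x - y⟫ + ν / 2 * ‖T x - y‖ ^ 2 with hq
  have bdd : ∀ x : E, BddBelow (Set.range fun y : F => q x y) :=
    fun x => st2_env_bdd h hh lam ν hν (T x)
  change a * (⨅ y, q x₁ y) + b * (⨅ y, q x₂ y) - ν * μ / 2 * (a * b * ‖x₁ - x₂‖ ^ 2)
    ≤ ⨅ y, q (a • x₁ + b • x₂) y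
  set z := a • x₁ + b • x₂ with hzdef
  refine le_ciInf fun y => ?_
  have h1 := ciInf_le (bdd x₁) y
  have h2 := ciInf_le (bdd x₂) y
  have hcombo : T z - y = a • (T x₁ - y) + b • (T x₂ - y) := by
    have hid : a • (T x₁ - y) + b • (T x₂ - y) = (a • T x₁ + b • T x₂) - (a + b) • y := by
      module
    rw [hzdef, map_add, map_smul, map_smul, hid, hab, one_smul]
  have hdiff : (T x₁ - y) - (T x₂ - y) = T (x₁ - x₂) := by
    rw [map_sub]; abel
  have hnorm := combo_norm_sq a b hab (T x₁ - y) (T x₂ - y)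
  rw [hdiff] at hnorm
  have hTd := hT (x₁ - x₂)
  have hid2 : a * q x₁ y + b * q x₂ y
      = q z y + ν / 2 * (a * b * ‖T (x₁ - x₂)‖ ^ 2) := by
    simp only [hq]
    rw [hcombo, hnorm, inner_add_right, real_inner_smul_right, real_inner_smul_right]
    linear_combination (h y) * hab
  have hmono : ν / 2 * (a * b * ‖T (x₁ - x₂)‖ ^ 2)
      ≤ ν * μ / 2 * (a * b * ‖x₁ - x₂‖ ^ 2) := by
    have hab2 : 0 ≤ a * b := mul_nonneg ha hb
    nlinarith [mul_le_mul_of_nonneg_left hTd (mul_nonneg (le_of_lt (half_pos hν)) hab2)]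
  clear_value q z
  have hm1 := mul_le_mul_of_nonneg_left h1 ha
  have hm2 := mul_le_mul_of_nonneg_left h2 hb
  calc a * (⨅ y, q x₁ y) + b * (⨅ y, q x₂ y) - ν * μ / 2 * (a * b * ‖x₁ - x₂‖ ^ 2)
      ≤ a * q x₁ y + b * q x₂ y - ν * μ / 2 * (a * b * ‖x₁ - x₂‖ ^ 2) := by linarith
    _ = q z y + ν / 2 * (a * b * ‖T (x₁ - x₂)‖ ^ 2)
          - ν * μ / 2 * (a * b * ‖x₁ - x₂‖ ^ 2) := by rw [hid2]
    _ ≤ q z y := by linarith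
end envconv

section aux
variable {E : Type*} [NormedAddCommGroup E] [InnerProductSpace ℝ E] [CompleteSpace E]
variable {F : Type*} [NormedAddCommGroup F] [InnerProductSpace ℝ F] [FiniteDimensional ℝ F]

theorem st2_aux
    (f : E → ℝ) (f' : E → E)
    (hfconv : ConvexOn ℝ Set.univ f)
    (hfdiff : ∀ x, HasGradientAt f (f' x) x)
    (Lf : ℝ) (hLf : 0 < Lf)
    (hlip : ∀ x y, ‖f' x - f' y‖ ≤ Lf * ‖x - y‖)
    (h : F → ℝ) (hhconv : ConvexOn ℝ Set.univ h)
    (T : E →ₗ[ℝ] F) (ν : ℝ) (hν : 0 < ν) (lam : F)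
    (μ : ℝ) (hμ0 : 0 ≤ μ) (hT : ∀ x, ‖T x‖ ^ 2 ≤ μ * ‖x‖ ^ 2)
    (φ : E → ℝ)
    (hφ : ∀ x, φ x = f x + ⨅ y : F, (h y + ⟪lam, T x - y⟫ + ν / 2 * ‖T x - y‖ ^ 2))
    (φ' : E → E) (hφ' : ∀ x, HasGradientAt φ (φ' x) x) :
    ∀ x₁ x₂, ‖φ' x₁ - φ' x₂‖ ≤ (Lf + ν * μ) * ‖x₁ - x₂‖ := by
  set L := Lf + ν * μ with hL
  have hL0 : 0 < L := by rw [hL]; nlinarith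
  set e : E → ℝ := fun x => ⨅ y : F, (h y + ⟪lam, T x - y⟫ + ν / 2 * ‖T x - y‖ ^ 2) with he
  have hφfun : φ = fun x => f x + e x := funext fun x => hφ x
  have hφconv : ConvexOn ℝ Set.univ φ := by
    rw [hφfun]; exact hfconv.add (st2_envT_convex h hhconv lam ν hν T)
  -- p1 := Lf/2 ‖x‖² − f is convex
  have hp1grad : ∀ x : E, HasGradientAt (fun x : E => Lf / 2 * ‖x‖ ^ 2 - f x)
      (Lf • x - f' x) x := by
    intro x
    rw [hasGradientAt_iff_hasFDerivAt, map_sub]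
    exact ((gradsq Lf x).hasFDerivAt).sub (hfdiff x).hasFDerivAt
  have hp1mono : ∀ u v : E, 0 ≤ ⟪(Lf • u - f' u) - (Lf • v - f' v), u - v⟫ := by
    intro u v
    have hsplit : (Lf • u - f' u) - (Lf • v - f' v) = Lf • (u - v) - (f' u - f' v) := by
      module
    rw [hsplit, inner_sub_left, real_inner_smul_left, real_inner_self_eq_norm_sq]
    have h1 := real_inner_le_norm (f' u - f' v) (u - v)
    have h2 := hlip u v
    nlinarith [norm_nonneg (u - v), norm_nonneg (f' u - f' v)]
  have hp1conv : ConvexOn ℝ Set.univ (fun x : E => Lf / 2 * ‖x‖ ^ 2 - f x) :=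
    st2_fo_convex _ _ (fun x y => st2_mono_fo _ _ hp1grad hp1mono x y)
  -- p2 := νμ/2 ‖x‖² − e is convex
  have hp2conv : ConvexOn ℝ Set.univ (fun x : E => ν * μ / 2 * ‖x‖ ^ 2 - e x) := by
    refine ⟨convex_univ, fun x₁ _ x₂ _ a b ha hb hab => ?_⟩
    have hrev : a * e x₁ + b * e x₂ - ν * μ / 2 * (a * b * ‖x₁ - x₂‖ ^ 2)
        ≤ e (a • x₁ + b • x₂) :=
      st2_envT_reverse h hhconv lam ν μ hν T hT a b ha hb hab x₁ x₂
    have hnc := combo_norm_sq a b hab x₁ x₂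
    simp only [smul_eq_mul]
    rw [hnc]
    linarith
  -- ψ := L/2‖x‖² − φ is convex with gradient L•x − φ' x
  have hψgrad : ∀ x : E, HasGradientAt (fun x : E => L / 2 * ‖x‖ ^ 2 - φ x)
      (L • x - φ' x) x := by
    intro x
    rw [hasGradientAt_iff_hasFDerivAt, map_sub]
    exact ((gradsq L x).hasFDerivAt).sub (hφ' x).hasFDerivAt
  have hψconv : ConvexOn ℝ Set.univ (fun x : E => L / 2 * ‖x‖ ^ 2 - φ x) := by
    have hsum := hp1conv.add hp2conv
    have heq : (fun x : E => L / 2 * ‖x‖ ^ 2 - φ x)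
        = fun x : E => (Lf / 2 * ‖x‖ ^ 2 - f x) + (ν * μ / 2 * ‖x‖ ^ 2 - e x) := by
      funext x
      simp only [hφfun, hL]
      ring
    rw [heq]; exact hsum
  -- first-order bounds
  have FOφ : ∀ x y : E, φ x + ⟪φ' x, y - x⟫ ≤ φ y := st2_convex_fo φ φ' hφconv hφ'
  have FOψ := st2_convex_fo _ _ hψconv hψgrad
  have descent : ∀ x y : E, φ y ≤ φ x + ⟪φ' x, y - x⟫ + L / 2 * ‖y - x‖ ^ 2 := by
    intro x y
    have hψ := FOψ x y
    rw [inner_sub_left, real_inner_smul_left] at hψ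
    have hsq : ‖y - x‖ ^ 2 = ‖y‖ ^ 2 - 2 * ⟪y, x⟫ + ‖x‖ ^ 2 := norm_sub_sq_real y x
    have hxy : ⟪x, y - x⟫ = ⟪x, y⟫ - ‖x‖ ^ 2 := by
      rw [inner_sub_right, real_inner_self_eq_norm_sq]
    have hcomm : ⟪y, x⟫ = ⟪x, y⟫ := real_inner_comm x y
    rw [hxy] at hψ
    have hsq' : L / 2 * ‖y - x‖ ^ 2 = L / 2 * ‖y‖ ^ 2 - L * ⟪x, y⟫ + L / 2 * ‖x‖ ^ 2 := by
      rw [hsq, hcomm]; ring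
    linarith
  -- cocoercivity
  have coco : ∀ x y : E, φ x + ⟪φ' x, y - x⟫ + 1 / (2 * L) * ‖φ' y - φ' x‖ ^ 2 ≤ φ y := by
    intro x y
    set d := φ' y - φ' x with hd
    set z := y - (1 / L) • d with hz
    have h1 := FOφ x z
    have h2 := descent y z
    have hzy : z - y = -((1 / L) • d) := by rw [hz]; abel
    have hzx : z - x = (y - x) - (1 / L) • d := by rw [hz]; abel
    have hnorm : ‖z - y‖ ^ 2 = (1 / L) ^ 2 * ‖d‖ ^ 2 := by
      rw [hzy, norm_neg, norm_smul, Real.norm_eq_abs, mul_pow, sq_abs]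
    have hi1 : ⟪φ' x, z - x⟫ = ⟪φ' x, y - x⟫ - 1 / L * ⟪φ' x, d⟫ := by
      rw [hzx, inner_sub_right, real_inner_smul_right]
    have hi2 : ⟪φ' y, z - y⟫ = -(1 / L * ⟪φ' y, d⟫) := by
      rw [hzy, inner_neg_right, real_inner_smul_right]
    have hdd : ⟪φ' y, d⟫ - ⟪φ' x, d⟫ = ‖d‖ ^ 2 := by
      rw [← inner_sub_left, ← hd, real_inner_self_eq_norm_sq]
    rw [hi1] at h1
    rw [hi2, hnorm] at h2
    have hcomb := le_trans h1 h2
    have hLne : L ≠ 0 := hL0.ne'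
    have hfield : L / 2 * ((1 / L) ^ 2 * ‖d‖ ^ 2) = 1 / (2 * L) * ‖d‖ ^ 2 := by
      field_simp
    have hfield2 : 1 / L * ‖d‖ ^ 2 - 1 / (2 * L) * ‖d‖ ^ 2 = 1 / (2 * L) * ‖d‖ ^ 2 := by
      field_simp
      ring
    have hdd' : 1 / L * ⟪φ' y, d⟫ - 1 / L * ⟪φ' x, d⟫ = 1 / L * ‖d‖ ^ 2 := by
      rw [← mul_sub, hdd]
    linarith
  -- conclusion
  intro x₁ x₂
  have c1 := coco x₁ x₂
  have c2 := coco x₂ x₁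
  have hi : ⟪φ' x₁, x₂ - x₁⟫ + ⟪φ' x₂, x₁ - x₂⟫ = -⟪φ' x₂ - φ' x₁, x₂ - x₁⟫ := by
    rw [inner_sub_left, show x₁ - x₂ = -(x₂ - x₁) from by abel, inner_neg_right]
    ring
  have hnr : ‖φ' x₁ - φ' x₂‖ = ‖φ' x₂ - φ' x₁‖ := norm_sub_rev _ _
  have hsum : 1 / L * ‖φ' x₂ - φ' x₁‖ ^ 2 ≤ ⟪φ' x₂ - φ' x₁, x₂ - x₁⟫ := by
    have h12 : 1 / (2 * L) * ‖φ' x₂ - φ' x₁‖ ^ 2 + 1 / (2 * L) * ‖φ' x₁ - φ' x₂‖ ^ 2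
        = 1 / L * ‖φ' x₂ - φ' x₁‖ ^ 2 := by
      rw [show ‖φ' x₁ - φ' x₂‖ = ‖φ' x₂ - φ' x₁‖ from norm_sub_rev _ _]
      field_simp
      ring
    linarith
  have hcs := real_inner_le_norm (φ' x₂ - φ' x₁) (x₂ - x₁)
  rw [hnr, show ‖x₁ - x₂‖ = ‖x₂ - x₁‖ from norm_sub_rev _ _]
  rcases eq_or_lt_of_le (norm_nonneg (φ' x₂ - φ' x₁)) with h0 | h0
  · rw [← h0]; positivity
  · have hkey : 1 / L * ‖φ' x₂ - φ' x₁‖ ^ 2 ≤ ‖φ' x₂ - φ' x₁‖ * ‖x₂ - x₁‖ :=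
      le_trans hsum hcs
    have hmul := mul_le_mul_of_nonneg_left hkey hL0.le
    have hLD : L * (1 / L * ‖φ' x₂ - φ' x₁‖ ^ 2) = ‖φ' x₂ - φ' x₁‖ ^ 2 := by
      field_simp
    rw [hLD] at hmul
    nlinarith [h0]
end aux

set_option maxHeartbeats 1000000 in
/-- Let `f : ℝⁿ → ℝ` be convex differentiable with `∇f` Lipschitz with constant `L_f > 0`,
`h : ℝᵐ → ℝ` closed convex, `A ∈ ℝ^{m×n}`, `ν > 0`, `lam ∈ ℝᵐ`, and
`φ₁(x) := f(x) + min_y { h(y) + ⟨lam, Ax − y⟩ + (ν/2)‖Ax − y‖² }`.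
Then `∇φ₁` is Lipschitz with constant `L_f + ν·λ_max(AᵀA)`.
Here `μ = λ_max(AᵀA)` is encoded as an eigenvalue of `AᵀA` dominating all
(real) eigenvalues, and `φ'` is the gradient of `φ₁`. -/
theorem statement2 {n m : ℕ}
    (f : EuclideanSpace ℝ (Fin n) → ℝ)
    (f' : EuclideanSpace ℝ (Fin n) → EuclideanSpace ℝ (Fin n))
    (hfconv : ConvexOn ℝ Set.univ f)
    (hfdiff : ∀ x, HasGradientAt f (f' x) x)
    (Lf : ℝ) (hLf : 0 < Lf)
    (hlip : ∀ x y, ‖f' x - f' y‖ ≤ Lf * ‖x - y‖)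
    (h : EuclideanSpace ℝ (Fin m) → ℝ)
    (hhconv : ConvexOn ℝ Set.univ h)
    (hhclosed : ∀ α : ℝ, IsClosed {y | h y ≤ α})
    (A : Matrix (Fin m) (Fin n) ℝ)
    (ν : ℝ) (hν : 0 < ν)
    (lam : EuclideanSpace ℝ (Fin m))
    -- `μ` is the largest eigenvalue of `AᵀA`
    (μ : ℝ)
    (hμ : Module.End.HasEigenvalue (Matrix.toEuclideanLin (Aᵀ * A)) μ)
    (hμmax : ∀ c : ℝ, Module.End.HasEigenvalue (Matrix.toEuclideanLin (Aᵀ * A)) c → c ≤ μ)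
    -- `φ` is the function `φ₁`, with gradient `φ'`
    (φ : EuclideanSpace ℝ (Fin n) → ℝ)
    (hφ : ∀ x, φ x = f x + ⨅ y : EuclideanSpace ℝ (Fin m),
        (h y + ⟪lam, Matrix.toEuclideanLin A x - y⟫
          + ν / 2 * ‖Matrix.toEuclideanLin A x - y‖ ^ 2))
    (φ' : EuclideanSpace ℝ (Fin n) → EuclideanSpace ℝ (Fin n))
    (hφ' : ∀ x, HasGradientAt φ (φ' x) x) :
    ∀ x₁ x₂, ‖φ' x₁ - φ' x₂‖ ≤ (Lf + ν * μ) * ‖x₁ - x₂‖ := by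
  intro x₁ x₂
  rcases subsingleton_or_nontrivial (EuclideanSpace ℝ (Fin n)) with hs | hnt
  · have hx : x₁ = x₂ := Subsingleton.elim _ _
    rw [hx]
    simp
  · set T : EuclideanSpace ℝ (Fin n) →ₗ[ℝ] EuclideanSpace ℝ (Fin m) :=
      Matrix.toEuclideanLin A with hTdef
    set S : EuclideanSpace ℝ (Fin n) →ₗ[ℝ] EuclideanSpace ℝ (Fin n) :=
      Matrix.toEuclideanLin (Aᵀ * A) with hSdef
    have hScomp : S = (Matrix.toEuclideanLin Aᵀ).comp T := by
      rw [hSdef, hTdef, Matrix.toEuclideanLin_eq_toLin, Matrix.toEuclideanLin_eq_toLin,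
        Matrix.toEuclideanLin_eq_toLin,
        Matrix.toLin_mul _ (PiLp.basisFun 2 ℝ (Fin m)) _]
    have hAt : Matrix.toEuclideanLin Aᵀ = LinearMap.adjoint T := by
      rw [hTdef, ← Matrix.conjTranspose_eq_transpose_of_trivial,
        Matrix.toEuclideanLin_conjTranspose_eq_adjoint]
    have hST : ∀ x, ⟪S x, x⟫ = ‖T x‖ ^ 2 := by
      intro x
      rw [hScomp, LinearMap.comp_apply, hAt, LinearMap.adjoint_inner_left,
        real_inner_self_eq_norm_sq]
    have hsym : S.IsSymmetric := by
      intro u v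
      rw [hScomp]
      simp only [LinearMap.comp_apply, hAt]
      rw [LinearMap.adjoint_inner_left, LinearMap.adjoint_inner_right]
    have heig := hsym.hasEigenvalue_iSup_of_finiteDimensional
    have hRμ : (⨆ x : {x : EuclideanSpace ℝ (Fin n) // x ≠ 0},
        RCLike.re ⟪S (x : EuclideanSpace ℝ (Fin n)), (x : EuclideanSpace ℝ (Fin n))⟫
          / ‖(x : EuclideanSpace ℝ (Fin n))‖ ^ 2) ≤ μ := by
      apply hμmax
      simpa using heig
    set SL := LinearMap.toContinuousLinearMap S with hSL
    have hbdd : BddAbove (Set.range fun x : {x : EuclideanSpace ℝ (Fin n) // x ≠ 0} =>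
        RCLike.re ⟪S (x : EuclideanSpace ℝ (Fin n)), (x : EuclideanSpace ℝ (Fin n))⟫
          / ‖(x : EuclideanSpace ℝ (Fin n))‖ ^ 2) := by
      refine ⟨‖SL‖, ?_⟩
      rintro r ⟨⟨x, hx⟩, rfl⟩
      have hx2 : (0:ℝ) < ‖x‖ ^ 2 := pow_pos (norm_pos_iff.mpr hx) 2
      have h1 : ⟪S x, x⟫ ≤ ‖S x‖ * ‖x‖ := real_inner_le_norm _ _
      have h2 : ‖S x‖ ≤ ‖SL‖ * ‖x‖ := by
        have := SL.le_opNorm x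
        simpa [hSL] using this
      simp only [RCLike.re_to_real]
      rw [div_le_iff₀ hx2]
      nlinarith [norm_nonneg x, norm_nonneg (S x), mul_le_mul_of_nonneg_right h2 (norm_nonneg x)]
    have hTb : ∀ x, ‖T x‖ ^ 2 ≤ μ * ‖x‖ ^ 2 := by
      intro x
      by_cases hx : x = 0
      · simp [hx]
      · have hle := le_ciSup hbdd ⟨x, hx⟩
        have hle2 := le_trans hle hRμ
        simp only [RCLike.re_to_real] at hle2
        have hx2 : (0:ℝ) < ‖x‖ ^ 2 := pow_pos (norm_pos_iff.mpr hx) 2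
        rw [div_le_iff₀ hx2] at hle2
        rw [← hST x]
        linarith
    have hμ0 : 0 ≤ μ := by
      obtain ⟨x, hx⟩ := exists_ne (0 : EuclideanSpace ℝ (Fin n))
      have := hTb x
      have hx2 : (0:ℝ) < ‖x‖ ^ 2 := pow_pos (norm_pos_iff.mpr hx) 2
      nlinarith [sq_nonneg ‖T x‖]
    exact st2_aux f f' hfconv hfdiff Lf hLf hlip h hhconv T ν hν lam μ hμ0 hTb φ hφ φ' hφ' x₁ x₂
end
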